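/- arXiv:2601.20027 — 4 statements merged into one kernel-verified Lean document; each statement's English description precedes it below -/
import Mathlib

section
/- For all non-negative integers m and k, the integral of x^{2m} · sin(2kx)/sin(x) over [0, π/2] equals 2·(2m)! times the sum over j from 0 to m of (-1)^j · Ō_k^{(2j+1)}/(2m-2j)! · (π/2)^{2m-2j}, where Ō_k^{(s)} = Σ_{n=1}^{k} (-1)^{n-1}/(2n-1)^s is the alternating odd harmonic number of order s. -/
open Real Finset

/-- Alternating odd harmonic number `Ō_k^{(s)} = ∑_{n=1}^k (-1)^{n-1}/(2n-1)^s`. -/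
noncomputable def Obar (k s : ℕ) : ℝ := ∑ n ∈ Finset.range k, (-1)^n / ((2*(n:ℝ)+1))^s


lemma cos_odd (n : ℕ) : Real.cos ((2*(n:ℝ)+1) * (π/2)) = 0 := by
  have : (2*(n:ℝ)+1) * (π/2) = (n:ℝ) * π - (-(π/2)) := by ring
  rw [this, Real.cos_nat_mul_pi_sub, Real.cos_neg, Real.cos_pi_div_two, mul_zero]

lemma sin_odd (n : ℕ) : Real.sin ((2*(n:ℝ)+1) * (π/2)) = (-1)^n := by
  have : (2*(n:ℝ)+1) * (π/2) = (n:ℝ) * π - (-(π/2)) := by ring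
  rw [this, Real.sin_nat_mul_pi_sub, Real.sin_neg, Real.sin_pi_div_two]
  ring

lemma sin_eq (k : ℕ) (x : ℝ) :
    Real.sin ((2*(k:ℝ))*x) = Real.sin x * (2 * ∑ n ∈ range k, Real.cos ((2*(n:ℝ)+1)*x)) := by
  induction k with
  | zero => simp
  | succ k ih =>
    rw [Finset.sum_range_succ]
    have h1 : (2*((k:ℝ)+1))*x = (2*(k:ℝ)+1)*x + x := by ring
    have h2 : (2*(k:ℝ))*x = (2*(k:ℝ)+1)*x - x := by ring
    push_cast
    rw [h1, Real.sin_add]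
    rw [h2, Real.sin_sub] at ih
    nlinarith [ih]


lemma J0 (c : ℝ) (hc : c ≠ 0) :
    ∫ x in (0:ℝ)..(π/2), Real.cos (c*x) = Real.sin (c*(π/2)) / c := by
  have h : ∀ x ∈ Set.uIcc (0:ℝ) (π/2), HasDerivAt (fun y => Real.sin (c*y) / c) (Real.cos (c*x)) x := by
    intro x _
    have : HasDerivAt (fun y => Real.sin (c*y)) (Real.cos (c*x) * c) x := by
      simpa [mul_comm, Function.comp_def] using (Real.hasDerivAt_sin (c*x)).comp x ((hasDerivAt_id x).const_mul c)
    simpa [mul_div_assoc, mul_div_cancel_right₀ _ hc] using this.div_const c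
  have := intervalIntegral.integral_eq_sub_of_hasDerivAt h
    ((Real.continuous_cos.comp (continuous_const.mul continuous_id)).intervalIntegrable _ _)
  simpa using this

lemma ibp_cos (p : ℕ) (c : ℝ) (hc : c ≠ 0) :
    ∫ x in (0:ℝ)..(π/2), x^(p+1) * Real.cos (c*x)
      = (π/2)^(p+1) * Real.sin (c*(π/2)) / c
        - (((p:ℝ)+1)/c) * ∫ x in (0:ℝ)..(π/2), x^p * Real.sin (c*x) := by
  have hu : ∀ x ∈ Set.uIcc (0:ℝ) (π/2), HasDerivAt (fun y : ℝ => y^(p+1)) (((p:ℝ)+1) * x^p) x := by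
    intro x _; simpa using (hasDerivAt_pow (p+1) x)
  have hv : ∀ x ∈ Set.uIcc (0:ℝ) (π/2), HasDerivAt (fun y => Real.sin (c*y) / c) (Real.cos (c*x)) x := by
    intro x _
    have : HasDerivAt (fun y => Real.sin (c*y)) (Real.cos (c*x) * c) x := by
      simpa [mul_comm, Function.comp_def] using (Real.hasDerivAt_sin (c*x)).comp x ((hasDerivAt_id x).const_mul c)
    simpa [mul_div_assoc, mul_div_cancel_right₀ _ hc] using this.div_const c
  have h := intervalIntegral.integral_mul_deriv_eq_deriv_mul hu hv
    ((continuous_const.mul (continuous_pow p)).intervalIntegrable _ _)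
    ((Real.continuous_cos.comp (continuous_const.mul continuous_id)).intervalIntegrable _ _)
  rw [h]
  simp only [zero_pow (Nat.succ_ne_zero p), zero_mul, sub_zero]
  rw [← intervalIntegral.integral_const_mul]
  congr 1
  · ring
  · apply intervalIntegral.integral_congr; intro x _; simp; ring

lemma ibp_sin (p : ℕ) (c : ℝ) (hc : c ≠ 0) :
    ∫ x in (0:ℝ)..(π/2), x^(p+1) * Real.sin (c*x)
      = -((π/2)^(p+1) * Real.cos (c*(π/2)) / c)
        + (((p:ℝ)+1)/c) * ∫ x in (0:ℝ)..(π/2), x^p * Real.cos (c*x) := by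
  have hu : ∀ x ∈ Set.uIcc (0:ℝ) (π/2), HasDerivAt (fun y : ℝ => y^(p+1)) (((p:ℝ)+1) * x^p) x := by
    intro x _; simpa using (hasDerivAt_pow (p+1) x)
  have hv : ∀ x ∈ Set.uIcc (0:ℝ) (π/2), HasDerivAt (fun y => -(Real.cos (c*y) / c)) (Real.sin (c*x)) x := by
    intro x _
    have : HasDerivAt (fun y => Real.cos (c*y)) (-Real.sin (c*x) * c) x := by
      simpa [mul_comm, Function.comp_def] using (Real.hasDerivAt_cos (c*x)).comp x ((hasDerivAt_id x).const_mul c)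
    have := (this.div_const c).neg
    simpa [neg_mul, neg_div, mul_div_assoc, mul_div_cancel_right₀ _ hc, Pi.neg_def] using this
  have h := intervalIntegral.integral_mul_deriv_eq_deriv_mul hu hv
    ((continuous_const.mul (continuous_pow p)).intervalIntegrable _ _)
    ((Real.continuous_sin.comp (continuous_const.mul continuous_id)).intervalIntegrable _ _)
  rw [h]
  simp only [zero_pow (Nat.succ_ne_zero p), zero_mul, sub_zero]
  rw [← intervalIntegral.integral_const_mul]
  have : ∫ x in (0:ℝ)..(π/2), ((p:ℝ)+1) * x^p * -(Real.cos (c*x)/c)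
      = ∫ x in (0:ℝ)..(π/2), -((((p:ℝ)+1)/c) * (x^p * Real.cos (c*x))) := by
    apply intervalIntegral.integral_congr; intro x _; ring
  rw [this, intervalIntegral.integral_neg, intervalIntegral.integral_const_mul]
  ring

lemma codd_ne (n : ℕ) : (2*(n:ℝ)+1) ≠ 0 := by positivity

lemma Jform (m n : ℕ) :
    ∫ x in (0:ℝ)..(π/2), x^(2*m) * Real.cos ((2*(n:ℝ)+1)*x)
      = ∑ j ∈ range (m+1), (-1)^n * (-1)^j * ((2*m).factorial : ℝ)
          / ((2*m-2*j).factorial : ℝ) * (π/2)^(2*m-2*j) / (2*(n:ℝ)+1)^(2*j+1) := by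
  set c : ℝ := 2*(n:ℝ)+1 with hc
  have hcne : c ≠ 0 := codd_ne n
  induction m with
  | zero =>
    simp only [Nat.mul_zero, pow_zero, one_mul, range_one, sum_singleton, Nat.sub_zero]
    rw [J0 c hcne, sin_odd n]
    simp [pow_one]
  | succ m ih =>
    have hI : ∫ x in (0:ℝ)..(π/2), x^(2*(m+1)) * Real.cos (c*x)
        = (π/2)^(2*(m+1)) * (-1)^n / c
          - ((2*(m:ℝ)+2)*(2*(m:ℝ)+1)/c^2) * ∫ x in (0:ℝ)..(π/2), x^(2*m) * Real.cos (c*x) := by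
      have e : 2*(m+1) = (2*m+1)+1 := by ring
      rw [e, ibp_cos _ c hcne, ibp_sin _ c hcne, cos_odd n, sin_odd n]
      push_cast
      have e2 : ((2*m+1:ℕ):ℝ) = 2*(m:ℝ)+1 := by push_cast; ring
      field_simp
      ring
    have key : ∑ j ∈ range (m+1+1), (-1:ℝ)^n * (-1)^j * ((2*(m+1)).factorial : ℝ)
          / ((2*(m+1)-2*j).factorial : ℝ) * (π/2)^(2*(m+1)-2*j) / c^(2*j+1)
        = (π/2)^(2*(m+1)) * (-1:ℝ)^n / c
          - ((2*(m:ℝ)+2)*(2*(m:ℝ)+1)/c^2) *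
            ∑ j ∈ range (m+1), (-1:ℝ)^n * (-1)^j * ((2*m).factorial : ℝ)
              / ((2*m-2*j).factorial : ℝ) * (π/2)^(2*m-2*j) / c^(2*j+1) := by
      rw [Finset.sum_range_succ']
      have hfact : ((2*(m+1)).factorial : ℝ) = (2*(m:ℝ)+2) * (2*(m:ℝ)+1) * ((2*m).factorial : ℝ) := by
        have e : 2*(m+1) = (2*m+1)+1 := by ring
        rw [e, Nat.factorial_succ, Nat.factorial_succ]
        push_cast; ring
      have hF : ((2*(m+1)).factorial:ℝ) ≠ 0 := by
        exact_mod_cast (Nat.factorial_pos (2*(m+1))).ne'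
      have h0 : (-1:ℝ)^n * (-1)^0 * ((2*(m+1)).factorial : ℝ)
            / ((2*(m+1)-2*0).factorial : ℝ) * (π/2)^(2*(m+1)-2*0) / c^(2*0+1)
          = (π/2)^(2*(m+1)) * (-1:ℝ)^n / c := by
        simp only [pow_zero, mul_one, Nat.mul_zero, Nat.sub_zero, pow_one]
        field_simp
        ring
      rw [h0]
      have hrest : ∑ j ∈ range (m+1),
            (-1:ℝ)^n * (-1)^(j+1) * ((2*(m+1)).factorial : ℝ)
            / ((2*(m+1)-2*(j+1)).factorial : ℝ) * (π/2)^(2*(m+1)-2*(j+1)) / c^(2*(j+1)+1)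
          = -(((2*(m:ℝ)+2)*(2*(m:ℝ)+1)/c^2) *
              ∑ j ∈ range (m+1), (-1:ℝ)^n * (-1)^j * ((2*m).factorial : ℝ)
                / ((2*m-2*j).factorial : ℝ) * (π/2)^(2*m-2*j) / c^(2*j+1)) := by
        rw [Finset.mul_sum, ← Finset.sum_neg_distrib]
        apply Finset.sum_congr rfl
        intro j hj
        have hsub : 2*(m+1)-2*(j+1) = 2*m-2*j := by omega
        rw [hsub, hfact, pow_succ (-1:ℝ) j]
        have hcp : c^(2*(j+1)+1) = c^(2*j+1) * c^2 := by ring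
        rw [hcp]
        have hcpne : c^(2*j+1) ≠ 0 := pow_ne_zero _ hcne
        have hGF : ((2*m-2*j).factorial:ℝ) ≠ 0 := by
          exact_mod_cast (Nat.factorial_pos (2*m-2*j)).ne'
        field_simp
      rw [hrest]
      ring
    rw [hI, ih, key]

theorem stmt_1 (m k : ℕ) :
    ∫ x in (0:ℝ)..(π/2), x^(2*m) * (Real.sin ((2*k:ℝ)*x) / Real.sin x) =
      2 * ((2*m).factorial : ℝ) *
        ∑ j ∈ Finset.range (m+1),
          (-1)^j * Obar k (2*j+1) / ((2*m-2*j).factorial : ℝ) * (π/2)^(2*m-2*j) := by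
  have step1 : ∫ x in (0:ℝ)..(π/2), x^(2*m) * (Real.sin ((2*k:ℝ)*x) / Real.sin x)
      = ∫ x in (0:ℝ)..(π/2), ∑ n ∈ range k, 2 * (x^(2*m) * Real.cos ((2*(n:ℝ)+1)*x)) := by
    apply intervalIntegral.integral_congr_ae
    filter_upwards with x hx
    rw [Set.uIoc_of_le (by positivity : (0:ℝ) ≤ π/2)] at hx
    have hs : Real.sin x ≠ 0 := by
      have := Real.sin_pos_of_pos_of_lt_pi hx.1 (lt_of_le_of_lt hx.2 (by linarith [pi_pos]))
      linarith
    have h := sin_eq k x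
    rw [h, mul_comm (Real.sin x), mul_div_assoc, div_self hs, mul_one, Finset.mul_sum,
      Finset.mul_sum]
    apply Finset.sum_congr rfl
    intro n _
    ring
  rw [step1, intervalIntegral.integral_finset_sum]
  · have step2 : ∀ n ∈ range k,
        (∫ x in (0:ℝ)..(π/2), 2 * (x^(2*m) * Real.cos ((2*(n:ℝ)+1)*x)))
        = ∑ j ∈ range (m+1), 2 * ((-1:ℝ)^n * (-1)^j * ((2*m).factorial : ℝ)
            / ((2*m-2*j).factorial : ℝ) * (π/2)^(2*m-2*j) / (2*(n:ℝ)+1)^(2*j+1)) := by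
      intro n _
      rw [intervalIntegral.integral_const_mul, Jform, Finset.mul_sum]
    rw [Finset.sum_congr rfl step2, Finset.sum_comm]
    unfold Obar
    rw [Finset.mul_sum]
    apply Finset.sum_congr rfl
    intro j _
    rw [Finset.mul_sum, Finset.sum_div, Finset.sum_mul, Finset.mul_sum]
    apply Finset.sum_congr rfl
    intro n _
    ring
  · intro n _
    exact (continuous_const.mul ((continuous_pow _).mul
      (Real.continuous_cos.comp (continuous_const.mul continuous_id)))).intervalIntegrable _ _
end

section
/- For 0 < x < π/2, tan(x)·ln(sin(x)) = -Σ_{k=1}^∞ (∫₀¹ (1-t)/(1+t) · t^{k-1} dt) · sin(2kx). -/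
open Real Finset

open MeasureTheory in
lemma geom_sin (t x : ℝ) (ht : |t| < 1) :
    HasSum (fun k : ℕ => t^k * Real.sin (2*((k:ℝ)+1)*x))
      (Real.sin (2*x) / (1 - 2*t*Real.cos (2*x) + t^2)) := by
  set z : ℂ := Complex.exp (((2*x : ℝ) : ℂ) * Complex.I) with hz
  have hzre : z.re = Real.cos (2*x) := Complex.exp_ofReal_mul_I_re _
  have hzim : z.im = Real.sin (2*x) := Complex.exp_ofReal_mul_I_im _
  have hnorm : ‖(t:ℂ) * z‖ < 1 := by
    rw [norm_mul, hz, Complex.norm_exp_ofReal_mul_I, mul_one, Complex.norm_real,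
      Real.norm_eq_abs]
    exact ht
  have h1 : HasSum (fun k : ℕ => z * ((t:ℂ)*z)^k) (z * (1 - (t:ℂ)*z)⁻¹) :=
    (hasSum_geometric_of_norm_lt_one hnorm).mul_left z
  have hne : (1 : ℂ) - (t:ℂ)*z ≠ 0 := by
    have h' : (t:ℂ)*z ≠ 1 := by
      intro h; rw [h] at hnorm; simp at hnorm
    exact sub_ne_zero_of_ne (Ne.symm h')
  have h2 := Complex.imCLM.hasSum h1
  have hsc : Real.sin (2*x)^2 + Real.cos (2*x)^2 = 1 := Real.sin_sq_add_cos_sq _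
  have hD : Complex.normSq (1 - (t:ℂ)*z) = 1 - 2*t*Real.cos (2*x) + t^2 := by
    simp only [Complex.normSq_apply, Complex.sub_re, Complex.sub_im, Complex.one_re,
      Complex.one_im, Complex.mul_re, Complex.mul_im, Complex.ofReal_re,
      Complex.ofReal_im, hzre, hzim]
    linear_combination t^2 * hsc
  convert h2 using 2 with k
  · have hzz : z * ((t:ℂ)*z)^k = (t:ℂ)^k * z^(k+1) := by ring
    rw [Complex.imCLM_apply, hzz]
    have hzk : z^(k+1) = Complex.exp (((2*((k:ℝ)+1)*x : ℝ) : ℂ) * Complex.I) := by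
      rw [hz, ← Complex.exp_nat_mul]
      congr 1
      push_cast
      ring
    rw [hzk]
    simp only [Complex.mul_im, Complex.exp_ofReal_mul_I_im, Complex.exp_ofReal_mul_I_re,
      ← Complex.ofReal_pow, Complex.ofReal_re, Complex.ofReal_im]
    ring
  · rw [Complex.imCLM_apply, ← hD]
    have hD0 : Complex.normSq (1 - (t:ℂ)*z) ≠ 0 := by
      simpa [Complex.normSq_eq_zero] using hne
    rw [Complex.mul_im, Complex.inv_im, Complex.inv_re]
    rw [Complex.sub_re, Complex.sub_im, Complex.one_re, Complex.one_im,
      Complex.mul_re, Complex.mul_im, Complex.ofReal_re, Complex.ofReal_im,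
      hzre, hzim]
    field_simp
    ring

lemma key_integral (x : ℝ) (hx : 0 < x) (hx' : x < π/2) :
    ∫ t in (0:ℝ)..1, -((1-t)/(1+t) *
      (Real.sin (2*x) / (1 - 2*t*Real.cos (2*x) + t^2)))
      = Real.tan x * Real.log (Real.sin x) := by
  have hcos : 0 < Real.cos x := Real.cos_pos_of_mem_Ioo ⟨by linarith, hx'⟩
  have hsin : 0 < Real.sin x := Real.sin_pos_of_pos_of_lt_pi hx (by linarith [Real.pi_pos])
  have hs2 : 0 < Real.sin (2*x) := Real.sin_pos_of_pos_of_lt_pi (by linarith) (by linarith)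
  have hsc : Real.sin (2*x)^2 + Real.cos (2*x)^2 = 1 := Real.sin_sq_add_cos_sq _
  have hDpos : ∀ t : ℝ, 0 < 1 - 2*t*Real.cos (2*x) + t^2 := by
    intro t
    nlinarith [sq_nonneg (t - Real.cos (2*x)), hs2]
  set c := Real.cos (2*x) with hc
  set s := Real.sin (2*x) with hs
  have hderiv : ∀ t ∈ Set.uIcc (0:ℝ) 1,
      HasDerivAt (fun t : ℝ => Real.tan x * (Real.log (t^2 - 2*t*c + 1) / 2 - Real.log (1+t)))
        (-((1-t)/(1+t) * (s / (1 - 2*t*c + t^2)))) t := by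
    intro t htmem
    rw [Set.uIcc_of_le (by norm_num : (0:ℝ) ≤ 1)] at htmem
    have ht0 : 0 ≤ t := htmem.1
    have ht1 : 0 < 1 + t := by linarith
    have hD : 0 < t^2 - 2*t*c + 1 := by have := hDpos t; linarith
    have h1 : HasDerivAt (fun t : ℝ => t^2 - 2*t*c + 1) (2*t - 2*c) t := by
      have heq : (fun t : ℝ => t^2 - 2*t*c + 1) = fun t : ℝ => t^2 - t*(2*c) + 1 := by
        funext u; ring
      rw [heq]
      have h := ((hasDerivAt_pow 2 t).sub ((hasDerivAt_id t).mul_const (2*c))).add_const 1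
      refine h.congr_deriv ?_
      norm_num
    have h2 : HasDerivAt (fun t : ℝ => Real.log (t^2 - 2*t*c + 1))
        ((2*t - 2*c) / (t^2 - 2*t*c + 1)) t := by
      simpa [div_eq_mul_inv] using (h1.log hD.ne')
    have h3 : HasDerivAt (fun t : ℝ => Real.log (1+t)) (1/(1+t)) t := by
      have := ((hasDerivAt_id t).const_add 1).log ht1.ne'
      simpa using this
    have h4 := ((h2.div_const 2).sub h3).const_mul (Real.tan x)
    refine h4.congr_deriv (Eq.symm ?_)
    rw [Real.tan_eq_sin_div_cos]
    have hsin2 : s = 2 * Real.sin x * Real.cos x := by rw [hs, Real.sin_two_mul]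
    have hcos2 : c = 2 * Real.cos x ^ 2 - 1 := by rw [hc, Real.cos_two_mul]
    have hD' : 0 < t^2 - 2*t*(2*Real.cos x^2 - 1) + 1 := by rw [← hcos2]; exact hD
    have hD'' : 0 < 1 - 2*t*(2*Real.cos x^2 - 1) + t^2 := by
      rw [← hcos2]; exact hDpos t
    rw [hsin2, hcos2]
    rw [show 1 - 2*t*(2*Real.cos x^2 - 1) + t^2 = t^2 - 2*t*(2*Real.cos x^2 - 1) + 1 by ring]
    have hD3 := hD'.ne'
    have hc3 := hcos.ne'
    have ht3 := ht1.ne'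
    field_simp
    linear_combination (-1) * mul_inv_cancel₀ hD3
  have hcont : ContinuousOn (fun t : ℝ => -((1-t)/(1+t) * (s / (1 - 2*t*c + t^2))))
      (Set.uIcc (0:ℝ) 1) := by
    apply ContinuousOn.neg
    apply ContinuousOn.mul
    · apply ContinuousOn.div (by fun_prop) (by fun_prop)
      intro t htmem
      rw [Set.uIcc_of_le (by norm_num : (0:ℝ) ≤ 1)] at htmem
      have := htmem.1; intro h; linarith [h]
    · apply ContinuousOn.div (by fun_prop) (by fun_prop)
      intro t _
      exact (hDpos t).ne'
  rw [intervalIntegral.integral_eq_sub_of_hasDerivAt hderiv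
    (hcont.intervalIntegrable)]
  have hcc : (1:ℝ)^2 - 2*1*c + 1 = (2*Real.sin x)^2 := by
    rw [hc, Real.cos_two_mul]
    have := Real.sin_sq_add_cos_sq x
    nlinarith
  have h00 : (0:ℝ)^2 - 2*0*c + 1 = 1 := by ring
  rw [hcc, h00, Real.log_pow, Real.log_one]
  have hlog : Real.log (2*Real.sin x) = Real.log 2 + Real.log (Real.sin x) :=
    Real.log_mul (by norm_num) hsin.ne'
  have h11 : (1:ℝ) + 1 = 2 := by norm_num
  have h10 : (1:ℝ) + 0 = 1 := by norm_num
  rw [h11, h10, hlog, Real.log_one]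
  push_cast
  ring

noncomputable def fAux (x : ℝ) (k : ℕ) (t : ℝ) : ℝ :=
  (1-t)/(1+t) * t^k * (-Real.sin (2*((k:ℝ)+1)*x))

lemma fAux_cont (x : ℝ) (k : ℕ) : ContinuousOn (fAux x k) (Set.Icc (0:ℝ) 1) := by
  unfold fAux
  apply ContinuousOn.mul
  apply ContinuousOn.mul
  · apply ContinuousOn.div (by fun_prop) (by fun_prop)
    intro t ht
    have := ht.1
    intro h; linarith
  · fun_prop
  · fun_prop

open MeasureTheory in
lemma fAux_integrable (x : ℝ) (k : ℕ) : IntegrableOn (fAux x k) (Set.Ioc (0:ℝ) 1) :=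
  ((fAux_cont x k).integrableOn_Icc).mono_set Set.Ioc_subset_Icc_self

open MeasureTheory in
lemma fAux_norm_bound (x : ℝ) (k : ℕ) :
    ∫ t in Set.Ioc (0:ℝ) 1, ‖fAux x k t‖ ≤ ((k:ℝ)+1)⁻¹ - ((k:ℝ)+2)⁻¹ := by
  have h1 : ∫ t in Set.Ioc (0:ℝ) 1, ‖fAux x k t‖ ≤ ∫ t in Set.Ioc (0:ℝ) 1, (1-t)*t^k := by
    apply setIntegral_mono_on ((fAux_integrable x k).norm)
    · exact ((continuous_const.sub continuous_id).mul
        (continuous_pow k)).integrableOn_Ioc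
    · exact measurableSet_Ioc
    · intro t ht
      have ht0 : 0 < t := ht.1
      have ht1 : t ≤ 1 := ht.2
      have e4 : |Real.sin (2*((k:ℝ)+1)*x)| ≤ 1 := Real.abs_sin_le_one _
      have htk : (0:ℝ) ≤ t^k := pow_nonneg ht0.le k
      rw [fAux, Real.norm_eq_abs, abs_mul, abs_mul, abs_neg, abs_div,
        abs_of_nonneg (by linarith : (0:ℝ) ≤ 1-t),
        abs_of_nonneg (by linarith : (0:ℝ) ≤ 1+t), abs_of_nonneg htk]
      have hdiv : (1-t)/(1+t) ≤ 1-t := div_le_self (by linarith) (by linarith)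
      have hdivnn : 0 ≤ (1-t)/(1+t) := div_nonneg (by linarith) (by linarith)
      have hA : (1-t)/(1+t) * t^k * |Real.sin (2*((k:ℝ)+1)*x)| ≤ (1-t)/(1+t) * t^k :=
        mul_le_of_le_one_right (mul_nonneg hdivnn htk) e4
      have hB : (1-t)/(1+t) * t^k ≤ (1-t) * t^k :=
        mul_le_mul_of_nonneg_right hdiv htk
      linarith
  have h2 : ∫ t in Set.Ioc (0:ℝ) 1, (1-t)*t^k = ((k:ℝ)+1)⁻¹ - ((k:ℝ)+2)⁻¹ := by
    rw [← intervalIntegral.integral_of_le (by norm_num : (0:ℝ) ≤ 1)]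
    have hsplit : ∫ t in (0:ℝ)..1, (1-t)*t^k
        = (∫ t in (0:ℝ)..1, t^k) - ∫ t in (0:ℝ)..1, t^(k+1) := by
      rw [← intervalIntegral.integral_sub ((continuous_pow k).intervalIntegrable 0 1)
        ((continuous_pow (k+1)).intervalIntegrable 0 1)]
      apply intervalIntegral.integral_congr
      intro t _
      ring
    rw [hsplit, integral_pow, integral_pow]
    have hk1 : ((k:ℝ)+1) ≠ 0 := by positivity
    have hk2 : ((k:ℝ)+2) ≠ 0 := by positivity
    push_cast
    field_simp
    ring
  linarith

lemma summable_bound : Summable (fun k : ℕ => ((k:ℝ)+1)⁻¹ - ((k:ℝ)+2)⁻¹) := by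
  have hsq : Summable (fun k : ℕ => (((k:ℝ)+1)^2)⁻¹) := by
    have h := Real.summable_one_div_nat_pow.mpr (show 1 < 2 by norm_num)
    have h2 := (summable_nat_add_iff 1).mpr h
    apply h2.congr
    intro k
    push_cast
    rw [one_div]
  apply Summable.of_nonneg_of_le _ _ hsq
  · intro k
    have hk1 : (0:ℝ) < (k:ℝ)+1 := by positivity
    have hk2 : (0:ℝ) < (k:ℝ)+2 := by positivity
    have := inv_anti₀ hk1 (by linarith : (k:ℝ)+1 ≤ (k:ℝ)+2)
    linarith
  · intro k
    have hk1 : (0:ℝ) < (k:ℝ)+1 := by positivity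
    have hk2 : (0:ℝ) < (k:ℝ)+2 := by positivity
    rw [inv_sub_inv hk1.ne' hk2.ne']
    have h : (k:ℝ)+2 - ((k:ℝ)+1) = 1 := by ring
    rw [h, inv_eq_one_div]
    apply one_div_le_one_div_of_le (by positivity)
    nlinarith

open MeasureTheory in
theorem stmt_7 (x : ℝ) (hx : 0 < x) (hx' : x < π/2) :
    HasSum (fun k : ℕ => -((∫ t in (0:ℝ)..1, (1-t)/(1+t) * t^k) * Real.sin (2*((k:ℝ)+1)*x)))
      (Real.tan x * Real.log (Real.sin x)) := by
  have hsummable : Summable (fun k : ℕ => ∫ t in Set.Ioc (0:ℝ) 1, ‖fAux x k t‖) := by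
    apply Summable.of_nonneg_of_le _ (fun k => fAux_norm_bound x k) summable_bound
    intro k
    exact integral_nonneg (fun t => norm_nonneg _)
  have H := hasSum_integral_of_summable_integral_norm
    (μ := volume.restrict (Set.Ioc (0:ℝ) 1)) (fun k => fAux_integrable x k) hsummable
  have hval : ∫ t in Set.Ioc (0:ℝ) 1, ∑' k, fAux x k t
      = Real.tan x * Real.log (Real.sin x) := by
    rw [integral_Ioc_eq_integral_Ioo]
    have hEq : Set.EqOn (fun t => ∑' k, fAux x k t)
        (fun t => -((1-t)/(1+t) * (Real.sin (2*x) / (1 - 2*t*Real.cos (2*x) + t^2))))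
        (Set.Ioo (0:ℝ) 1) := by
      intro t ht
      have habs : |t| < 1 := abs_lt.mpr ⟨by linarith [ht.1], ht.2⟩
      have hsum := (geom_sin t x habs).mul_left (-((1-t)/(1+t)))
      have heq : (fun k : ℕ => fAux x k t)
          = fun k : ℕ => -((1-t)/(1+t)) * (t^k * Real.sin (2*((k:ℝ)+1)*x)) := by
        funext k
        unfold fAux
        ring
      simp only []
      rw [heq, hsum.tsum_eq]
      ring
    rw [setIntegral_congr_fun measurableSet_Ioo hEq]
    rw [← integral_Ioc_eq_integral_Ioo,
      ← intervalIntegral.integral_of_le (by norm_num : (0:ℝ) ≤ 1)]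
    exact key_integral x hx hx'
  rw [hval] at H
  refine Eq.subst (motive := fun f => HasSum f _) (Eq.symm ?_) H
  funext k
  have hpull : ∫ t in Set.Ioc (0:ℝ) 1, fAux x k t
      = (∫ t in (0:ℝ)..1, (1-t)/(1+t) * t^k) * (-Real.sin (2*((k:ℝ)+1)*x)) := by
    rw [← intervalIntegral.integral_of_le (by norm_num : (0:ℝ) ≤ 1)]
    rw [← intervalIntegral.integral_mul_const]
    rfl
  rw [hpull]
  ring
end

section
/- For every non-negative integer m and positive integer n, ∫₀^{π/2} x^{2m} cos^{2n-1}(x) dx = ((2m)!/2) · 4^n/(n·C(2n,n)) · Σ_{j=0}^{m} (-1)^j t_n^⋆({2}_j)/(2m-2j)! · (π/2)^{2m-2j}, where t_n^⋆({2}_j) = Σ_{n ≥ k_1 ≥ … ≥ k_j ≥ 1} Π_{i=1}^{j} 1/(2k_i-1)² is the multiple t-harmonic star sum (with t_n^⋆(∅) = 1). -/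
open Real Finset intervalIntegral

/-- Multiple t-harmonic star sum `t_n^⋆({2}_j)`. -/
noncomputable def tstar : ℕ → ℕ → ℝ
  | _, 0 => 1
  | n, j+1 => ∑ k ∈ Finset.Icc 1 n, tstar k j / ((2*(k:ℝ))-1)^2

noncomputable def S (m N : ℕ) : ℝ :=
  ∑ j ∈ Finset.range (m+1),
    (-1:ℝ)^j * tstar (N+1) j / ((2*m-2*j).factorial : ℝ) * (π/2)^(2*m-2*j)

noncomputable def γr (N : ℕ) : ℝ := 4^(N+1) / (((N:ℝ)+1) * (Nat.choose (2*N+2) (N+1)))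

lemma tstar_zero (n : ℕ) : tstar n 0 = 1 := by simp [tstar]

lemma tstar1 (j : ℕ) : tstar 1 j = 1 := by
  induction j with
  | zero => simp [tstar]
  | succ j ih => simp [tstar, ih]; norm_num

lemma tstar_succ (N j : ℕ) :
    tstar (N+2) (j+1) = tstar (N+1) (j+1) + tstar (N+2) j / (2*(N:ℝ)+3)^2 := by
  show (∑ k ∈ Finset.Icc 1 (N+2), tstar k j / ((2*(k:ℝ))-1)^2) = _
  rw [Finset.sum_Icc_succ_top (by omega : 1 ≤ N+2)]
  congr 1
  show tstar (N+2) j / ((2*((N+2:ℕ):ℝ))-1)^2 = _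
  push_cast
  ring_nf

lemma S0 (N : ℕ) : S 0 N = 1 := by
  simp [S, tstar_zero]

lemma Sb (m : ℕ) :
    S (m+1) 0 = (π/2)^(2*m+2) / (((2*m+2).factorial : ℕ) : ℝ) - S m 0 := by
  unfold S
  rw [Finset.sum_range_succ']
  have h1 : ∀ i ∈ Finset.range (m+1),
      (-1:ℝ)^(i+1) * tstar (0+1) (i+1) / ((2*(m+1)-2*(i+1)).factorial : ℝ) * (π/2)^(2*(m+1)-2*(i+1))
      = -((-1:ℝ)^i * tstar (0+1) i / ((2*m-2*i).factorial : ℝ) * (π/2)^(2*m-2*i)) := by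
    intro i _
    rw [show 2*(m+1)-2*(i+1) = 2*m-2*i from by omega, tstar1, tstar1]
    ring
  rw [Finset.sum_congr rfl h1, Finset.sum_neg_distrib]
  rw [show 2*(m+1)-2*0 = 2*m+2 from by omega, tstar1]
  ring

lemma Ss (m N : ℕ) :
    (2*(N:ℝ)+3)^2 * S (m+1) (N+1) = (2*(N:ℝ)+3)^2 * S (m+1) N - S m (N+1) := by
  have hne : (2*(N:ℝ)+3)^2 ≠ 0 := by positivity
  unfold S
  rw [Finset.mul_sum, Finset.mul_sum, Finset.sum_range_succ', Finset.sum_range_succ'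
    (f := fun j => (2*(N:ℝ)+3)^2 * ((-1:ℝ)^j * tstar (N+1) j / ((2*(m+1)-2*j).factorial : ℝ) * (π/2)^(2*(m+1)-2*j)))]
  have h1 : ∀ i ∈ Finset.range (m+1),
      (2*(N:ℝ)+3)^2 * ((-1:ℝ)^(i+1) * tstar (N+1+1) (i+1) / ((2*(m+1)-2*(i+1)).factorial : ℝ) * (π/2)^(2*(m+1)-2*(i+1)))
      = (2*(N:ℝ)+3)^2 * ((-1:ℝ)^(i+1) * tstar (N+1) (i+1) / ((2*(m+1)-2*(i+1)).factorial : ℝ) * (π/2)^(2*(m+1)-2*(i+1)))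
        - (-1:ℝ)^i * tstar (N+1+1) i / ((2*m-2*i).factorial : ℝ) * (π/2)^(2*m-2*i) := by
    intro i _
    rw [show 2*(m+1)-2*(i+1) = 2*m-2*i from by omega, tstar_succ]
    field_simp
    ring
  rw [Finset.sum_congr rfl h1, Finset.sum_sub_distrib]
  rw [show (N+1+1) = N+2 from rfl, tstar_zero, tstar_zero]
  ring

lemma choose_ne (a b : ℕ) (h : b ≤ a) : ((Nat.choose a b : ℕ) : ℝ) ≠ 0 := by
  exact_mod_cast (Nat.choose_pos h).ne'

lemma gamma_succ (N : ℕ) : (2*(N:ℝ)+3) * γr (N+1) = (2*(N:ℝ)+2) * γr N := by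
  have k1 := Nat.choose_mul_factorial_mul_factorial (show N+1 ≤ 2*N+2 by omega)
  rw [show 2*N+2 - (N+1) = N+1 from by omega] at k1
  have k2 := Nat.choose_mul_factorial_mul_factorial (show N+2 ≤ 2*N+4 by omega)
  rw [show 2*N+4 - (N+2) = N+2 from by omega] at k2
  have K1 := congrArg (fun x : ℕ => (x : ℝ)) k1
  have K2 := congrArg (fun x : ℕ => (x : ℝ)) k2
  push_cast at K1 K2
  have F1 : ((2*N+4).factorial : ℝ) = (2*(N:ℝ)+4)*((2*N+3).factorial : ℝ) := by
    rw [show (2*N+4) = (2*N+3)+1 from by omega, Nat.factorial_succ]; push_cast; ring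
  have F2 : ((2*N+3).factorial : ℝ) = (2*(N:ℝ)+3)*((2*N+2).factorial : ℝ) := by
    rw [show (2*N+3) = (2*N+2)+1 from by omega, Nat.factorial_succ]; push_cast; ring
  have F3 : (((N+2).factorial : ℕ) : ℝ) = ((N:ℝ)+2)*((N+1).factorial : ℝ) := by
    rw [show (N+2) = (N+1)+1 from by omega, Nat.factorial_succ]; push_cast; ring
  have hF : ((N+1).factorial : ℝ) ≠ 0 := by exact_mod_cast (Nat.factorial_pos (N+1)).ne'
  have hc1 : ((Nat.choose (2*N+2) (N+1) : ℕ) : ℝ) ≠ 0 := choose_ne _ _ (by omega)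
  have hc2 : ((Nat.choose (2*N+4) (N+2) : ℕ) : ℝ) ≠ 0 := choose_ne _ _ (by omega)
  have hrel : ((N:ℝ)+2)^2 * (Nat.choose (2*N+4) (N+2) : ℝ)
      = (2*(N:ℝ)+4)*(2*(N:ℝ)+3) * (Nat.choose (2*N+2) (N+1) : ℝ) := by
    have h2 : ((N+1).factorial : ℝ)^2 ≠ 0 := pow_ne_zero _ hF
    apply mul_right_cancel₀ h2
    linear_combination K2
      - ((Nat.choose (2*N+4) (N+2) : ℝ)*(((N+2).factorial : ℝ) + ((N:ℝ)+2)*((N+1).factorial : ℝ)))*F3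
      + F1 + (2*(N:ℝ)+4)*F2 - (2*(N:ℝ)+4)*(2*(N:ℝ)+3)*K1
  unfold γr
  rw [show (N+1:ℕ)+1 = N+2 from rfl, show 2*(N+1)+2 = 2*N+4 from by omega]
  have hN2 : ((N:ℝ)+2) ≠ 0 := by positivity
  have hN1 : ((N:ℝ)+1) ≠ 0 := by positivity
  apply mul_left_cancel₀ hN2
  push_cast
  field_simp
  have hrel' : ((N:ℝ)+2) * (Nat.choose (2*N+4) (N+2) : ℝ)
      = 2*(2*(N:ℝ)+3) * (Nat.choose (2*N+2) (N+1) : ℝ) :=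
    mul_left_cancel₀ hN2 (by linear_combination hrel)
  linear_combination (-(8:ℝ) * 4^N) * hrel'


noncomputable def B (m N : ℕ) : ℝ := ∫ x in (0:ℝ)..(π/2), x^(2*m) * Real.cos x ^ (2*N+1)

lemma ibp1 (r : ℕ) (f f' : ℝ → ℝ) (hf : ∀ x, HasDerivAt f (f' x) x)
    (hcf' : Continuous f') :
    ∫ x in (0:ℝ)..(π/2), x^(r+1) * f' x
      = (π/2)^(r+1) * f (π/2) - ((r:ℝ)+1) * ∫ x in (0:ℝ)..(π/2), x^r * f x := by
  have hu : ∀ x ∈ Set.uIcc (0:ℝ) (π/2), HasDerivAt (fun y : ℝ => y^(r+1)) (((r:ℝ)+1)*x^r) x := by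
    intro x _
    simpa using hasDerivAt_pow (r+1) x
  have H := integral_mul_deriv_eq_deriv_mul hu (fun x _ => hf x)
    ((continuous_const.mul (continuous_pow r)).intervalIntegrable _ _)
    (hcf'.intervalIntegrable _ _)
  simp only [zero_pow (Nat.succ_ne_zero r)] at H
  rw [H]
  have : ∫ x in (0:ℝ)..(π/2), ((r:ℝ)+1)*x^r * f x = ((r:ℝ)+1) * ∫ x in (0:ℝ)..(π/2), x^r * f x := by
    rw [← integral_const_mul]
    congr 1; ext x; ring
  rw [this]; ring

lemma dcos2 (N : ℕ) (x : ℝ) :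
    HasDerivAt (fun y : ℝ => -((2*(N:ℝ)+3) * Real.cos y ^ (2*N+2) * Real.sin y))
      ((2*(N:ℝ)+3)*(2*(N:ℝ)+2) * Real.cos x ^ (2*N+1)
        - (2*(N:ℝ)+3)^2 * Real.cos x ^ (2*N+3)) x := by
  have h1 : HasDerivAt (fun y : ℝ => Real.cos y ^ (2*N+2))
      ((2*(N:ℝ)+2) * Real.cos x ^ (2*N+1) * (-Real.sin x)) x := by
    have := (Real.hasDerivAt_cos x).pow (2*N+2)
    exact this.congr_deriv (by push_cast; ring)
  have h2 := (h1.mul (Real.hasDerivAt_sin x)).const_mul (-(2*(N:ℝ)+3))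
  have hfun : (fun y : ℝ => -((2*(N:ℝ)+3) * Real.cos y ^ (2*N+2) * Real.sin y))
      = fun y : ℝ => -(2*(N:ℝ)+3) * (Real.cos y ^ (2*N+2) * Real.sin y) := by
    funext y; ring
  rw [hfun]
  refine h2.congr_deriv ?_
  have hs : Real.sin x ^ 2 = 1 - Real.cos x ^ 2 := Real.sin_sq x
  have e2 : Real.cos x ^ (2*N+2) = Real.cos x ^ (2*N+1) * Real.cos x := by ring
  have e3 : Real.cos x ^ (2*N+3) = Real.cos x ^ (2*N+1) * Real.cos x ^ 2 := by ring
  rw [e2, e3]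
  linear_combination ((2*(N:ℝ)+3)*(2*(N:ℝ)+2)* Real.cos x ^ (2*N+1)) * hs

lemma dcos3 (N : ℕ) (x : ℝ) :
    HasDerivAt (fun y : ℝ => Real.cos y ^ (2*N+3))
      (-((2*(N:ℝ)+3) * Real.cos x ^ (2*N+2) * Real.sin x)) x := by
  have := (Real.hasDerivAt_cos x).pow (2*N+3)
  exact this.congr_deriv (by push_cast; ring)

lemma split_int (p : ℕ) (N : ℕ) :
    ∫ x in (0:ℝ)..(π/2), x^p * ((2*(N:ℝ)+3)*(2*(N:ℝ)+2) * Real.cos x ^ (2*N+1)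
        - (2*(N:ℝ)+3)^2 * Real.cos x ^ (2*N+3))
    = (2*(N:ℝ)+3)*(2*(N:ℝ)+2) * (∫ x in (0:ℝ)..(π/2), x^p * Real.cos x ^ (2*N+1))
      - (2*(N:ℝ)+3)^2 * ∫ x in (0:ℝ)..(π/2), x^p * Real.cos x ^ (2*N+3) := by
  have h1 : IntervalIntegrable (fun x : ℝ => (2*(N:ℝ)+3)*(2*(N:ℝ)+2) * (x^p * Real.cos x ^ (2*N+1))) MeasureTheory.volume 0 (π/2) :=
    (by fun_prop : Continuous fun x : ℝ => (2*(N:ℝ)+3)*(2*(N:ℝ)+2) * (x^p * Real.cos x ^ (2*N+1))).intervalIntegrable _ _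
  have h2 : IntervalIntegrable (fun x : ℝ => (2*(N:ℝ)+3)^2 * (x^p * Real.cos x ^ (2*N+3))) MeasureTheory.volume 0 (π/2) :=
    (by fun_prop : Continuous fun x : ℝ => (2*(N:ℝ)+3)^2 * (x^p * Real.cos x ^ (2*N+3))).intervalIntegrable _ _
  rw [intervalIntegral.integral_congr (g := fun x : ℝ =>
      (2*(N:ℝ)+3)*(2*(N:ℝ)+2) * (x^p * Real.cos x ^ (2*N+1))
        - (2*(N:ℝ)+3)^2 * (x^p * Real.cos x ^ (2*N+3))) (fun x _ => by ring),
    intervalIntegral.integral_sub h1 h2, integral_const_mul, integral_const_mul]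

lemma L1 (m N : ℕ) :
    (2*(N:ℝ)+3)*(2*(N:ℝ)+2) * B (m+1) N
      = (2*(m:ℝ)+2)*(2*(m:ℝ)+1) * B m (N+1) + (2*(N:ℝ)+3)^2 * B (m+1) (N+1) := by
  have key := ibp1 (2*m+1) _ _ (dcos2 N) (by fun_prop)
  have inner := ibp1 (2*m) _ _ (dcos3 N) (by fun_prop)
  rw [split_int] at key
  have hc : Real.cos (π/2) = 0 := Real.cos_pi_div_two
  rw [inner] at key
  simp only [hc, Real.sin_pi_div_two, zero_pow, Nat.succ_ne_zero] at key
  have e1 : 2*m+1+1 = 2*(m+1) := by ring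
  have e2 : 2*N+3 = 2*(N+1)+1 := by ring
  rw [e1, e2] at key
  show (2*(N:ℝ)+3)*(2*(N:ℝ)+2) * ∫ x in (0:ℝ)..(π/2), x^(2*(m+1)) * Real.cos x ^ (2*N+1)
    = (2*(m:ℝ)+2)*(2*(m:ℝ)+1) * (∫ x in (0:ℝ)..(π/2), x^(2*m) * Real.cos x ^ (2*(N+1)+1))
      + (2*(N:ℝ)+3)^2 * ∫ x in (0:ℝ)..(π/2), x^(2*(m+1)) * Real.cos x ^ (2*(N+1)+1)
  have z1 : (0:ℝ)^(2*N+2) = 0 := zero_pow (by omega)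
  have z2 : (0:ℝ)^(2*(N+1)+1) = 0 := zero_pow (by omega)
  rw [z1, z2] at key
  push_cast at key ⊢
  linarith [key]

lemma L2 (m : ℕ) :
    B (m+1) 0 = (π/2)^(2*m+2) - (2*(m:ℝ)+2)*(2*(m:ℝ)+1) * B m 0 := by
  have outer := ibp1 (2*m+1) Real.sin Real.cos (fun x => Real.hasDerivAt_sin x)
    Real.continuous_cos
  have inner := ibp1 (2*m) (fun y => -Real.cos y) Real.sin
    (fun x => (Real.hasDerivAt_cos x).fun_neg.congr_deriv (neg_neg _)) Real.continuous_sin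
  have hneg : ∫ x in (0:ℝ)..(π/2), x^(2*m) * -Real.cos x
      = -∫ x in (0:ℝ)..(π/2), x^(2*m) * Real.cos x := by
    rw [← intervalIntegral.integral_neg]
    congr 1; ext x; ring
  rw [hneg] at inner
  simp only [Real.sin_pi_div_two, Real.cos_pi_div_two] at outer inner
  have e1 : 2*m+1+1 = 2*(m+1) := by ring
  rw [e1] at outer
  have hB1 : B (m+1) 0 = ∫ x in (0:ℝ)..(π/2), x^(2*(m+1)) * Real.cos x := by
    unfold B
    congr 1; ext x; norm_num
  have hB0 : B m 0 = ∫ x in (0:ℝ)..(π/2), x^(2*m) * Real.cos x := by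
    unfold B
    congr 1; ext x; norm_num
  rw [hB1, hB0, outer, inner]
  push_cast
  ring

lemma L3 (N : ℕ) :
    (2*(N:ℝ)+3)^2 * B 0 (N+1) = (2*(N:ℝ)+3)*(2*(N:ℝ)+2) * B 0 N := by
  have ftc := intervalIntegral.integral_eq_sub_of_hasDerivAt
    (f := fun y : ℝ => -((2*(N:ℝ)+3) * Real.cos y ^ (2*N+2) * Real.sin y))
    (f' := fun x : ℝ => (2*(N:ℝ)+3)*(2*(N:ℝ)+2) * Real.cos x ^ (2*N+1)
        - (2*(N:ℝ)+3)^2 * Real.cos x ^ (2*N+3))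
    (a := 0) (b := π/2)
    (fun x _ => dcos2 N x)
    ((by fun_prop : Continuous fun x : ℝ => (2*(N:ℝ)+3)*(2*(N:ℝ)+2) * Real.cos x ^ (2*N+1)
        - (2*(N:ℝ)+3)^2 * Real.cos x ^ (2*N+3)).intervalIntegrable _ _)
  have hz : (∫ x in (0:ℝ)..(π/2), (2*(N:ℝ)+3)*(2*(N:ℝ)+2) * Real.cos x ^ (2*N+1)
        - (2*(N:ℝ)+3)^2 * Real.cos x ^ (2*N+3)) = 0 := by
    rw [ftc]
    simp [Real.cos_pi_div_two, Real.sin_pi_div_two, zero_pow (by omega : 2*N+2 ≠ 0)]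
  have hcongr : (∫ x in (0:ℝ)..(π/2), (2*(N:ℝ)+3)*(2*(N:ℝ)+2) * Real.cos x ^ (2*N+1)
        - (2*(N:ℝ)+3)^2 * Real.cos x ^ (2*N+3))
      = ∫ x in (0:ℝ)..(π/2), x^0 * ((2*(N:ℝ)+3)*(2*(N:ℝ)+2) * Real.cos x ^ (2*N+1)
        - (2*(N:ℝ)+3)^2 * Real.cos x ^ (2*N+3)) := by
    congr 1; ext x; ring
  rw [hcongr, split_int 0 N] at hz
  have hB1 : B 0 (N+1) = ∫ x in (0:ℝ)..(π/2), x^0 * Real.cos x ^ (2*N+3) := by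
    unfold B
    congr 1
  have hB0 : B 0 N = ∫ x in (0:ℝ)..(π/2), x^0 * Real.cos x ^ (2*N+1) := by
    unfold B
    congr 1
  rw [hB1, hB0]
  linarith [hz]

lemma B00 : B 0 0 = 1 := by
  unfold B
  norm_num [integral_cos]

lemma factR (m : ℕ) : ((2*m+2).factorial : ℝ) = (2*(m:ℝ)+2)*(2*(m:ℝ)+1)*((2*m).factorial : ℝ) := by
  rw [show 2*m+2 = (2*m+1)+1 from by omega, Nat.factorial_succ, Nat.factorial_succ]
  push_cast; ring

lemma g0 : γr 0 = 2 := by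
  unfold γr
  norm_num

lemma main_lemma : ∀ N m, B m N = ((2*m).factorial : ℝ)/2 * γr N * S m N := by
  intro N
  induction N with
  | zero =>
    intro m
    induction m with
    | zero =>
      rw [B00, S0, g0]
      norm_num
    | succ m ih =>
      have hfac : ((2*m).factorial : ℝ) ≠ 0 := by
        exact_mod_cast (Nat.factorial_pos (2*m)).ne'
      rw [L2 m, ih, show 2*(m+1) = 2*m+2 from by omega, Sb m, factR m, g0]
      push_cast
      field_simp
  | succ N ihN =>
    intro m
    induction m with
    | zero =>
      have h3 := L3 N
      rw [ihN 0] at h3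
      have hC : ((2*(N:ℝ)+3)^2) ≠ 0 := by positivity
      apply mul_left_cancel₀ hC
      rw [h3, S0, S0]
      norm_num
      linear_combination (-(2*(N:ℝ)+3)/2) * gamma_succ N
    | succ m ih =>
      have h1 := L1 m N
      rw [ihN (m+1), ih, show 2*(m+1) = 2*m+2 from by omega] at h1
      have gs := gamma_succ N
      have ss := Ss m N
      have fr := factR m
      have hC : ((2*(N:ℝ)+3)^2) ≠ 0 := by positivity
      apply mul_left_cancel₀ hC
      rw [show 2*(m+1) = 2*m+2 from by omega]
      linear_combination -h1 - ((2*(N:ℝ)+3)*((2*m+2).factorial : ℝ)*(S (m+1) N)/2)*gs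
        - (((2*m+2).factorial : ℝ)*(γr (N+1))/2)*ss + ((γr (N+1))*(S m (N+1))/2)*fr

theorem stmt_8 (m n : ℕ) (hn : 0 < n) :
    ∫ x in (0:ℝ)..(π/2), x^(2*m) * (Real.cos x)^(2*n-1) =
      ((2*m).factorial : ℝ) / 2 * (4^n / ((n:ℝ) * (Nat.choose (2*n) n))) *
        ∑ j ∈ Finset.range (m+1),
          (-1)^j * tstar n j / ((2*m-2*j).factorial : ℝ) * (π/2)^(2*m-2*j) := by
  obtain ⟨N, rfl⟩ : ∃ N, n = N + 1 := ⟨n - 1, by omega⟩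
  have hmain := main_lemma N m
  rw [show 2*(N+1)-1 = 2*N+1 from by omega]
  have hL : (∫ x in (0:ℝ)..(π/2), x^(2*m) * (Real.cos x)^(2*N+1)) = B m N := rfl
  rw [hL, hmain]
  unfold γr S
  rw [show 2*(N+1) = 2*N+2 from by omega]
  push_cast
  ring
end

section
/- Σ_{n=1}^∞ 4^n/(n² C(2n,n)) = π²/2. -/
open Real Finset

noncomputable def cc (n : ℕ) : ℝ :=
  4^(n+1) / (((n:ℝ)+1)^2 * (Nat.choose (2*(n+1)) (n+1)))

noncomputable def bb (n : ℕ) : ℝ :=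
  4^(n+1) / (Nat.choose (2*(n+1)) (n+1))

lemma CB_pos (m : ℕ) : 0 < ((Nat.choose (2*m) m : ℕ) : ℝ) := by
  exact_mod_cast Nat.choose_pos (by omega)

lemma CB_rec (n : ℕ) : ((n:ℝ)+2) * (Nat.choose (2*(n+2)) (n+2) : ℝ)
    = 2*(2*(n:ℝ)+3) * (Nat.choose (2*(n+1)) (n+1) : ℝ) := by
  have h := Nat.succ_mul_centralBinom_succ (n+1)
  have h2 : Nat.centralBinom (n+2) = Nat.choose (2*(n+2)) (n+2) := rfl
  have h3 : Nat.centralBinom (n+1) = Nat.choose (2*(n+1)) (n+1) := rfl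
  rw [h2, h3] at h
  have h' := congrArg (Nat.cast : ℕ → ℝ) h
  push_cast at h'
  linarith

lemma bb_pos (n : ℕ) : 0 < bb n := by
  unfold bb
  have := CB_pos (n+1)
  positivity

lemma bb_rec (n : ℕ) : bb (n+1) * (2*(n:ℝ)+3) = bb n * (2*(n:ℝ)+4) := by
  unfold bb
  have h1 := CB_pos (n+1)
  have h2 := CB_pos (n+2)
  have h := CB_rec n
  field_simp
  linear_combination (-(2:ℝ) * 4^(n+1)) * h

lemma bb_sq_le (n : ℕ) : bb n ^ 2 ≤ 4*((n:ℝ)+1) := by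
  induction n with
  | zero =>
    have : bb 0 = 2 := by
      unfold bb; norm_num [Nat.choose]
    rw [this]; norm_num
  | succ n ih =>
    have h3 : (0:ℝ) < 2*(n:ℝ)+3 := by positivity
    have hr : bb (n+1) = bb n * (2*(n:ℝ)+4) / (2*(n:ℝ)+3) := by
      field_simp
      linarith [bb_rec n]
    rw [hr]
    rw [div_pow, div_le_iff₀ (by positivity)]
    push_cast
    nlinarith [ih, sq_nonneg (bb n)]

lemma bb_le (n : ℕ) : bb n ≤ 2 * Real.sqrt ((n:ℝ)+1) := by
  have h := bb_sq_le n
  have h2 : bb n ≤ Real.sqrt (4*((n:ℝ)+1)) := by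
    rw [show bb n = Real.sqrt (bb n ^ 2) from (Real.sqrt_sq (bb_pos n).le).symm]
    exact Real.sqrt_le_sqrt h
  calc bb n ≤ Real.sqrt (4*((n:ℝ)+1)) := h2
    _ = 2 * Real.sqrt ((n:ℝ)+1) := by
        rw [show (4:ℝ)*((n:ℝ)+1) = 2^2 * ((n:ℝ)+1) by ring, Real.sqrt_mul (by positivity),
          Real.sqrt_sq (by norm_num)]

lemma cc_eq (n : ℕ) : cc n = bb n / ((n:ℝ)+1)^2 := by
  unfold cc bb
  field_simp

lemma cc_pos (n : ℕ) : 0 < cc n := by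
  rw [cc_eq]; have := bb_pos n; positivity

lemma cc_le (n : ℕ) : cc n ≤ 2 / (((n:ℝ)+1) * Real.sqrt ((n:ℝ)+1)) := by
  rw [cc_eq]
  have hn : (0:ℝ) < (n:ℝ)+1 := by positivity
  have hs : Real.sqrt ((n:ℝ)+1) * Real.sqrt ((n:ℝ)+1) = (n:ℝ)+1 :=
    Real.mul_self_sqrt hn.le
  have hspos : 0 < Real.sqrt ((n:ℝ)+1) := Real.sqrt_pos.2 hn
  rw [div_le_div_iff₀ (by positivity) (by positivity)]
  calc bb n * (((n:ℝ)+1) * Real.sqrt ((n:ℝ)+1))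
      ≤ (2 * Real.sqrt ((n:ℝ)+1)) * (((n:ℝ)+1) * Real.sqrt ((n:ℝ)+1)) := by
        apply mul_le_mul_of_nonneg_right (bb_le n) (by positivity)
    _ = 2 * ((n:ℝ)+1)^2 := by rw [show (2 * Real.sqrt ((n:ℝ)+1)) * (((n:ℝ)+1) * Real.sqrt ((n:ℝ)+1)) = 2 * ((n:ℝ)+1) * (Real.sqrt ((n:ℝ)+1) * Real.sqrt ((n:ℝ)+1)) by ring, hs]; ring

lemma summable_cc : Summable cc := by
  have hsum : Summable (fun n : ℕ => 2 / (((n:ℝ)+1) * Real.sqrt ((n:ℝ)+1))) := by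
    have h1 : Summable (fun n : ℕ => (((n:ℝ)) ^ ((3:ℝ)/2))⁻¹) :=
      Real.summable_nat_rpow_inv.2 (by norm_num)
    have h2 : Summable (fun n : ℕ => ((((n:ℝ)+1)) ^ ((3:ℝ)/2))⁻¹) := by
      have := (summable_nat_add_iff (f := fun n : ℕ => (((n:ℝ)) ^ ((3:ℝ)/2))⁻¹) 1).2 h1
      simpa [Nat.cast_add] using this
    have heq : ∀ n : ℕ, 2 / (((n:ℝ)+1) * Real.sqrt ((n:ℝ)+1))
        = 2 * ((((n:ℝ)+1)) ^ ((3:ℝ)/2))⁻¹ := by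
      intro n
      have hn : (0:ℝ) < (n:ℝ)+1 := by positivity
      rw [show ((3:ℝ)/2) = 1 + 1/2 by norm_num, Real.rpow_add hn, Real.rpow_one,
        ← Real.sqrt_eq_rpow]
      rw [div_eq_mul_inv]
    simpa [heq] using h2.mul_left 2
  exact Summable.of_nonneg_of_le (fun n => (cc_pos n).le) cc_le hsum


noncomputable def al (n : ℕ) : ℝ := 2*((n:ℝ)+1)*(2*(n:ℝ)+1) * cc n

lemma al_succ (n : ℕ) : al (n+1) = 4*((n:ℝ)+1)^2 * cc n := by
  unfold al
  rw [cc_eq, cc_eq]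
  have hr : bb (n+1) * (2*(n:ℝ)+3) = bb n * (2*(n:ℝ)+4) := bb_rec n
  have h3 : (0:ℝ) < 2*(n:ℝ)+3 := by positivity
  have hb : bb (n+1) = bb n * (2*(n:ℝ)+4) / (2*(n:ℝ)+3) := by
    field_simp; linarith
  rw [hb]
  push_cast
  have hn2 : ((n:ℝ)+1+1) ≠ 0 := by positivity
  field_simp
  ring

lemma al_pos (n : ℕ) : 0 < al n := by
  unfold al; have := cc_pos n; positivity

lemma cc_le_two (n : ℕ) : cc n ≤ 2 := by
  have h := cc_le n
  have hn : (1:ℝ) ≤ (n:ℝ)+1 := by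
    have : (0:ℝ) ≤ (n:ℝ) := Nat.cast_nonneg n
    linarith
  have hs : (1:ℝ) ≤ Real.sqrt ((n:ℝ)+1) := by
    have := Real.sqrt_le_sqrt hn
    simpa using this
  calc cc n ≤ 2 / (((n:ℝ)+1) * Real.sqrt ((n:ℝ)+1)) := h
    _ ≤ 2 / 1 := by
        apply div_le_div_of_nonneg_left (by norm_num) (by norm_num)
        nlinarith
    _ = 2 := by norm_num

lemma al_le (n : ℕ) : al n ≤ 16 * ((n:ℝ)+1)^2 := by
  unfold al
  have h := cc_le_two n
  have h2 : (0:ℝ) ≤ 2*((n:ℝ)+1)*(2*(n:ℝ)+1) := by positivity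
  nlinarith [cc_pos n]

lemma al_zero : al 0 = 4 := by
  unfold al cc
  norm_num [Nat.choose]

lemma summable_aux {s : ℝ} (hs : ‖s‖ < 1) :
    Summable (fun n : ℕ => ((n:ℝ)+1)^2 * s^n) := by
  have h2 := summable_pow_mul_geometric_of_norm_lt_one (R := ℝ) 2 hs
  have h1 := summable_pow_mul_geometric_of_norm_lt_one (R := ℝ) 1 hs
  have h0 := summable_geometric_of_norm_lt_one hs
  have := (h2.add ((h1.mul_left 2).add h0))
  apply this.congr
  intro n
  push_cast
  ring

lemma P_eq (r : ℝ) (hr0 : 0 ≤ r) (hr : r < π/2) :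
    ∑' n : ℕ, (2*((n:ℝ)+1)*cc n) * (Real.sin r ^ (2*n+1) * Real.cos r) = 4*r := by
  have hpi : (0:ℝ) < π/2 := by positivity
  have hc : 0 < Real.cos r := Real.cos_pos_of_mem_Ioo ⟨by linarith, hr⟩
  have hq0 : 0 ≤ Real.sin r := Real.sin_nonneg_of_nonneg_of_le_pi hr0 (by linarith [Real.pi_pos])
  have hq1 : Real.sin r < 1 := by
    nlinarith [Real.sin_sq_add_cos_sq r, Real.sin_le_one r]
  set q := Real.sin r with hq
  -- the partial integrals
  set A : ℕ → ℝ := fun n => ∫ x in (0:ℝ)..r, al n * Real.sin x ^ (2*n) with hA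
  set f : ℕ → ℝ := fun n => (2*((n:ℝ)+1)*cc n) * (Real.sin r ^ (2*n+1) * Real.cos r) with hf
  -- monotonicity of sin on [0,r]
  have hsin_mono : ∀ x ∈ Set.Icc (0:ℝ) r, 0 ≤ Real.sin x ∧ Real.sin x ≤ q := by
    intro x hx
    obtain ⟨hx1, hx2⟩ := hx
    constructor
    · exact Real.sin_nonneg_of_nonneg_of_le_pi hx1 (by linarith [Real.pi_pos])
    · exact Real.strictMonoOn_sin.monotoneOn ⟨by linarith, by linarith⟩
        ⟨by linarith, hr.le⟩ hx2
  -- per-term FTC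
  have claim1 : ∀ n : ℕ, f n = A n - A (n+1) := by
    intro n
    have hderiv : ∀ x ∈ Set.uIcc (0:ℝ) r,
        HasDerivAt (fun y => (2*((n:ℝ)+1)*cc n) * (Real.cos y * Real.sin y ^ (2*n+1)))
          (al n * Real.sin x ^ (2*n) - al (n+1) * Real.sin x ^ (2*n+2)) x := by
      intro x _
      have hs := Real.hasDerivAt_sin x
      have hc' := Real.hasDerivAt_cos x
      have hpow := hs.pow (2*n+1)
      have hmul := hc'.mul hpow
      have := hmul.const_mul (2*((n:ℝ)+1)*cc n)
      refine this.congr_deriv (Eq.symm ?_)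
      have hcossq : Real.cos x ^ 2 = 1 - Real.sin x ^ 2 := Real.cos_sq' x
      have hal : al (n+1) = 4*((n:ℝ)+1)^2 * cc n := al_succ n
      rw [hal]
      unfold al
      have : (2*n+1 : ℕ) - 1 = 2*n := by omega
      rw [this]
      push_cast
      simp only [Pi.pow_apply]
      linear_combination (-(2*((n:ℝ)+1)*(2*(n:ℝ)+1)*cc n * Real.sin x^(2*n))) * hcossq
    have hcont : IntervalIntegrable
        (fun x => al n * Real.sin x ^ (2*n) - al (n+1) * Real.sin x ^ (2*n+2))
        MeasureTheory.volume 0 r := by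
      apply Continuous.intervalIntegrable
      exact (continuous_const.mul (Real.continuous_sin.pow _)).sub
        (continuous_const.mul (Real.continuous_sin.pow _))
    have hFTC := intervalIntegral.integral_eq_sub_of_hasDerivAt hderiv hcont
    have hint1 : IntervalIntegrable (fun x => al n * Real.sin x ^ (2*n))
        MeasureTheory.volume 0 r :=
      (continuous_const.mul (Real.continuous_sin.pow _)).intervalIntegrable _ _
    have hint2 : IntervalIntegrable (fun x => al (n+1) * Real.sin x ^ (2*n+2))
        MeasureTheory.volume 0 r :=
      (continuous_const.mul (Real.continuous_sin.pow _)).intervalIntegrable _ _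
    have hsub := intervalIntegral.integral_sub hint1 hint2
    rw [hsub] at hFTC
    have hAeq : A n - A (n+1) = (∫ x in (0:ℝ)..r, al n * Real.sin x ^ (2*n))
        - ∫ x in (0:ℝ)..r, al (n+1) * Real.sin x ^ (2*n+2) := by
      simp only [hA, show 2*(n+1) = 2*n+2 by ring]
    rw [hAeq, hFTC]
    simp only [hf]
    rw [Real.sin_zero, Real.cos_zero, zero_pow (by omega : 2*n+1 ≠ 0)]
    ring
  -- summability
  have hbound : ∀ n : ℕ, f n ≤ 16*((n:ℝ)+1)^2 * (q^2)^n := by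
    intro n
    have h1 : Real.sin r ^ (2*n+1) * Real.cos r ≤ (q^2)^n := by
      have : Real.sin r ^ (2*n+1) ≤ q ^ (2*n) := by
        rw [pow_succ]
        calc q ^ (2*n) * q ≤ q ^ (2*n) * 1 := by
              apply mul_le_mul_of_nonneg_left hq1.le (pow_nonneg hq0 _)
          _ = q ^ (2*n) := by ring
      calc Real.sin r ^ (2*n+1) * Real.cos r ≤ q ^ (2*n) * 1 := by
            apply mul_le_mul this (Real.cos_le_one r) hc.le (pow_nonneg hq0 _)
        _ = (q^2)^n := by rw [← pow_mul]; ring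
    have h2 : 2*((n:ℝ)+1)*cc n ≤ 16*((n:ℝ)+1)^2 := by
      have := cc_le_two n
      nlinarith [cc_pos n, Nat.cast_nonneg (α := ℝ) n]
    have h3 : 0 ≤ Real.sin r ^ (2*n+1) * Real.cos r := by positivity
    have h4 : 0 ≤ 2*((n:ℝ)+1)*cc n := by
      have := cc_pos n; positivity
    calc f n ≤ (16*((n:ℝ)+1)^2) * (Real.sin r ^ (2*n+1) * Real.cos r) := by
          exact mul_le_mul_of_nonneg_right h2 h3
      _ ≤ (16*((n:ℝ)+1)^2) * (q^2)^n := by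
          apply mul_le_mul_of_nonneg_left h1 (by positivity)
  have hq2 : ‖q^2‖ < 1 := by
    rw [Real.norm_eq_abs, abs_of_nonneg (by positivity)]
    nlinarith
  have hgeom := (summable_aux hq2).mul_left 16
  have hfnonneg : ∀ n, 0 ≤ f n := by
    intro n
    have := cc_pos n
    have : 0 ≤ 2*((n:ℝ)+1)*cc n := by positivity
    have h3 : 0 ≤ Real.sin r ^ (2*n+1) * Real.cos r := by positivity
    exact mul_nonneg this h3
  have hgeom' : Summable (fun n : ℕ => 16*((n:ℝ)+1)^2 * (q^2)^n) :=
    hgeom.congr (fun n => by ring)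
  have hsumf : Summable f := Summable.of_nonneg_of_le hfnonneg hbound hgeom'
  -- A tends to zero
  have hAnonneg : ∀ n, 0 ≤ A n := by
    intro n
    apply intervalIntegral.integral_nonneg hr0
    intro x hx
    have := al_pos n
    have := (hsin_mono x hx).1
    positivity
  have hAle : ∀ n, A n ≤ 16*((n:ℝ)+1)^2 * (q^2)^n * r := by
    intro n
    have hmono : A n ≤ ∫ x in (0:ℝ)..r, al n * q ^ (2*n) := by
      apply intervalIntegral.integral_mono_on hr0
      · exact (continuous_const.mul (Real.continuous_sin.pow _)).intervalIntegrable _ _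
      · exact (continuous_const.mul continuous_const).intervalIntegrable _ _
      · intro x hx
        apply mul_le_mul_of_nonneg_left _ (al_pos n).le
        exact pow_le_pow_left₀ (hsin_mono x hx).1 (hsin_mono x hx).2 _
    have hconst : (∫ x in (0:ℝ)..r, al n * q ^ (2*n)) = al n * q ^ (2*n) * r := by
      rw [intervalIntegral.integral_const]
      simp [smul_eq_mul]
      ring
    calc A n ≤ al n * q ^ (2*n) * r := by rw [← hconst]; exact hmono
      _ ≤ 16*((n:ℝ)+1)^2 * (q^2)^n * r := by
          apply mul_le_mul_of_nonneg_right _ hr0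
          rw [show (q^2)^n = q^(2*n) by rw [← pow_mul]]
          exact mul_le_mul_of_nonneg_right (al_le n) (by positivity)
  have hAzero : Filter.Tendsto A Filter.atTop (nhds 0) := by
    apply squeeze_zero hAnonneg hAle
    have := (hgeom'.mul_right r).tendsto_atTop_zero
    apply this.congr
    intro n; ring
  -- telescoping
  have hps : ∀ N, ∑ n ∈ Finset.range N, f n = A 0 - A N := by
    intro N
    rw [Finset.sum_congr rfl (fun n _ => claim1 n)]
    exact Finset.sum_range_sub' A N
  have htends1 : Filter.Tendsto (fun N => ∑ n ∈ Finset.range N, f n)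
      Filter.atTop (nhds (∑' n, f n)) := hsumf.hasSum.tendsto_sum_nat
  have htends2 : Filter.Tendsto (fun N => ∑ n ∈ Finset.range N, f n)
      Filter.atTop (nhds (A 0)) := by
    simp only [hps]
    have := Filter.Tendsto.const_sub (A 0) hAzero
    simpa using this
  have heq := tendsto_nhds_unique htends1 htends2
  rw [heq]
  have hA0 : A 0 = ∫ x in (0:ℝ)..r, (4:ℝ) := by
    rw [hA]
    apply intervalIntegral.integral_congr
    intro x _
    simp [al_zero]
  rw [hA0, intervalIntegral.integral_const]
  simp [smul_eq_mul]
  ring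

lemma u_eq (t : ℝ) (ht0 : 0 ≤ t) (ht : t < π/2) :
    ∑' n : ℕ, cc n * Real.sin t ^ (2*n+2) = 2*t^2 := by
  set F : ℕ → ℝ → ℝ :=
    fun n r => (2*((n:ℝ)+1)*cc n) * (Real.sin r ^ (2*n+1) * Real.cos r) with hF
  have hFcont : ∀ n, Continuous (F n) := by
    intro n
    exact continuous_const.mul ((Real.continuous_sin.pow _).mul Real.continuous_cos)
  -- per-term FTC
  have hterm : ∀ n : ℕ, (∫ x in Set.Ioc (0:ℝ) t, F n x) = cc n * Real.sin t ^ (2*n+2) := by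
    intro n
    rw [← intervalIntegral.integral_of_le ht0]
    have hderiv : ∀ x ∈ Set.uIcc (0:ℝ) t,
        HasDerivAt (fun y => cc n * Real.sin y ^ (2*n+2)) (F n x) x := by
      intro x _
      have hpow := (Real.hasDerivAt_sin x).pow (2*n+2)
      have := hpow.const_mul (cc n)
      refine this.congr_deriv ?_
      have h1 : (2*n+2 : ℕ) - 1 = 2*n+1 := by omega
      rw [h1, hF]
      push_cast
      ring
    have hFTC := intervalIntegral.integral_eq_sub_of_hasDerivAt hderiv
      ((hFcont n).intervalIntegrable _ _)
    rw [hFTC, Real.sin_zero, zero_pow (by omega : 2*n+2 ≠ 0)]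
    ring
  -- nonnegativity on the interval
  have hFnonneg : ∀ n : ℕ, ∀ x ∈ Set.Ioc (0:ℝ) t, 0 ≤ F n x := by
    intro n x hx
    have hs : 0 ≤ Real.sin x :=
      Real.sin_nonneg_of_nonneg_of_le_pi hx.1.le (by linarith [Real.pi_pos, hx.2])
    have hcx : 0 ≤ Real.cos x := by
      apply Real.cos_nonneg_of_mem_Icc
      constructor <;> [linarith [Real.pi_pos, hx.1.le]; linarith [hx.2]]
    have := cc_pos n
    rw [hF]
    positivity
  -- interchange
  have hint : ∀ n : ℕ, MeasureTheory.Integrable (F n)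
      (MeasureTheory.volume.restrict (Set.Ioc 0 t)) := by
    intro n
    exact ((hFcont n).integrableOn_Ioc)
  have hnorm : ∀ n : ℕ, (∫ x in Set.Ioc (0:ℝ) t, ‖F n x‖) = cc n * Real.sin t ^ (2*n+2) := by
    intro n
    rw [← hterm n]
    apply MeasureTheory.setIntegral_congr_fun measurableSet_Ioc
    intro x hx
    exact norm_of_nonneg (hFnonneg n x hx)
  have hsint : 0 ≤ Real.sin t := Real.sin_nonneg_of_nonneg_of_le_pi ht0 (by linarith [Real.pi_pos])
  have hsumnorm : Summable (fun n : ℕ => ∫ x in Set.Ioc (0:ℝ) t, ‖F n x‖) := by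
    apply Summable.of_nonneg_of_le
      (fun n => MeasureTheory.integral_nonneg (fun x => norm_nonneg _)) _ summable_cc
    intro n
    rw [hnorm n]
    calc cc n * Real.sin t ^ (2*n+2) ≤ cc n * 1 := by
          apply mul_le_mul_of_nonneg_left _ (cc_pos n).le
          exact pow_le_one₀ hsint (Real.sin_le_one t)
      _ = cc n := by ring
  have hswap := MeasureTheory.integral_tsum_of_summable_integral_norm hint hsumnorm
  have hleft : ∑' n : ℕ, (∫ x in Set.Ioc (0:ℝ) t, F n x) = ∑' n : ℕ, cc n * Real.sin t ^ (2*n+2) :=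
    tsum_congr hterm
  rw [← hleft, hswap]
  -- evaluate the integral of the tsum using P_eq
  have hP : ∀ x ∈ Set.Ioc (0:ℝ) t, (∑' n : ℕ, F n x) = 4*x := by
    intro x hx
    exact P_eq x hx.1.le (lt_of_le_of_lt hx.2 ht)
  rw [MeasureTheory.setIntegral_congr_fun measurableSet_Ioc hP]
  rw [← intervalIntegral.integral_of_le ht0]
  rw [intervalIntegral.integral_const_mul]
  simp [integral_id]
  ring

theorem stmt_11 :
    ∑' n : ℕ, 4^(n+1) / (((n:ℝ)+1)^2 * (Nat.choose (2*(n+1)) (n+1))) = π^2 / 2 := by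
  have hpi := Real.pi_pos
  have hkey : ∑' n : ℕ, cc n = π^2 / 2 := by
    apply le_antisymm
    · apply Real.tsum_le_of_sum_range_le (fun n => (cc_pos n).le)
      intro N
      have hcont : Filter.Tendsto (fun t : ℝ => ∑ n ∈ Finset.range N, cc n * Real.sin t ^ (2*n+2))
          (nhdsWithin (π/2) (Set.Iio (π/2))) (nhds (∑ n ∈ Finset.range N, cc n)) := by
        have hc : Continuous (fun t : ℝ => ∑ n ∈ Finset.range N, cc n * Real.sin t ^ (2*n+2)) := by
          apply continuous_finset_sum
          intro n _
          exact continuous_const.mul (Real.continuous_sin.pow _)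
        have := (hc.continuousAt (x := π/2)).continuousWithinAt (s := Set.Iio (π/2))
        have heval : (fun t : ℝ => ∑ n ∈ Finset.range N, cc n * Real.sin t ^ (2*n+2)) (π/2)
            = ∑ n ∈ Finset.range N, cc n := by
          simp [Real.sin_pi_div_two]
        rw [ContinuousWithinAt] at this
        simp only [Real.sin_pi_div_two, one_pow, mul_one] at this
        exact this
      apply le_of_tendsto hcont
      filter_upwards [Ioo_mem_nhdsLT_of_mem (Set.mem_Ioc.2 ⟨by positivity, le_refl (π/2)⟩)]
        with t ht
      obtain ⟨ht0, ht1⟩ := ht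
      have hsummable : Summable (fun n : ℕ => cc n * Real.sin t ^ (2*n+2)) := by
        have hsint : 0 ≤ Real.sin t :=
          Real.sin_nonneg_of_nonneg_of_le_pi ht0.le (by linarith)
        apply Summable.of_nonneg_of_le (fun n => mul_nonneg (cc_pos n).le (by positivity)) _ summable_cc
        intro n
        calc cc n * Real.sin t ^ (2*n+2) ≤ cc n * 1 := by
              apply mul_le_mul_of_nonneg_left _ (cc_pos n).le
              exact pow_le_one₀ hsint (Real.sin_le_one t)
          _ = cc n := by ring
      calc ∑ n ∈ Finset.range N, cc n * Real.sin t ^ (2*n+2)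
          ≤ ∑' n : ℕ, cc n * Real.sin t ^ (2*n+2) := by
            apply Summable.sum_le_tsum _ _ hsummable
            intro n _
            have hsint : 0 ≤ Real.sin t :=
              Real.sin_nonneg_of_nonneg_of_le_pi ht0.le (by linarith)
            have := cc_pos n
            positivity
        _ = 2*t^2 := u_eq t ht0.le ht1
        _ ≤ π^2/2 := by nlinarith
    · have hlim : Filter.Tendsto (fun t : ℝ => 2*t^2)
          (nhdsWithin (π/2) (Set.Iio (π/2))) (nhds (π^2/2)) := by
        have hc : Continuous (fun t : ℝ => 2*t^2) := by continuity
        have := (hc.continuousAt (x := π/2)).continuousWithinAt (s := Set.Iio (π/2))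
        have heval : (fun t : ℝ => 2*t^2) (π/2) = π^2/2 := by ring
        have h2 : 2*(π/2)^2 = π^2/2 := by ring
        rw [ContinuousWithinAt] at this
        simpa [h2] using this
      apply le_of_tendsto hlim
      filter_upwards [Ioo_mem_nhdsLT_of_mem (Set.mem_Ioc.2 ⟨by positivity, le_refl (π/2)⟩)]
        with t ht
      obtain ⟨ht0, ht1⟩ := ht
      have hsint : 0 ≤ Real.sin t :=
        Real.sin_nonneg_of_nonneg_of_le_pi ht0.le (by linarith)
      have hsummable : Summable (fun n : ℕ => cc n * Real.sin t ^ (2*n+2)) := by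
        apply Summable.of_nonneg_of_le (fun n => mul_nonneg (cc_pos n).le (by positivity)) _ summable_cc
        intro n
        calc cc n * Real.sin t ^ (2*n+2) ≤ cc n * 1 := by
              apply mul_le_mul_of_nonneg_left _ (cc_pos n).le
              exact pow_le_one₀ hsint (Real.sin_le_one t)
          _ = cc n := by ring
      calc 2*t^2 = ∑' n : ℕ, cc n * Real.sin t ^ (2*n+2) := (u_eq t ht0.le ht1).symm
        _ ≤ ∑' n : ℕ, cc n := by
            apply Summable.tsum_le_tsum _ hsummable summable_cc
            intro n
            calc cc n * Real.sin t ^ (2*n+2) ≤ cc n * 1 := by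
                  apply mul_le_mul_of_nonneg_left _ (cc_pos n).le
                  exact pow_le_one₀ hsint (Real.sin_le_one t)
              _ = cc n := by ring
  rw [← hkey]
  apply tsum_congr
  intro n
  rfl
end
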